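/- Let T be a tree on n vertices and let L^q_T be its q-Laplacian over R with q a real number satisfying |q| > 1. Then L^q_T (which is symmetric) has exactly n-1 positive eigenvalues, exactly 1 negative eigenvalue, and 0 as eigenvalue with multiplicity 0 (i.e., it is nonsingular with signature (n-1, 1, 0)). -/

import Mathlib

open Finset

noncomputable def qLap {n : ℕ} (G : SimpleGraph (Fin n)) [DecidableRel G.Adj]
    {R : Type*} [CommRing R] (q : R) : Matrix (Fin n) (Fin n) R :=
  Matrix.of fun i j =>
    if i = j then 1 + q ^ 2 * ((G.degree i : R) - 1)
    else if G.Adj i j then -q else 0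

section Aux

open Matrix SimpleGraph Walk

/-- In a tree, rooted at `r`, there is a parent function and a depth function. -/
lemma qLap_tree_parent {V : Type*} {G : SimpleGraph V} (hG : G.IsTree) (r : V) :
    ∃ (p : V → V) (depth : V → ℕ),
      (∀ v, v ≠ r → G.Adj v (p v)) ∧
      (∀ v, v ≠ r → depth (p v) + 1 = depth v) ∧
      (∀ v, depth v = 0 → v = r) ∧
      (∀ u w, G.Adj u w → (u ≠ r ∧ p u = w) ∨ (w ≠ r ∧ p w = u)) := by
  classical
  choose P hP using fun v => hG.existsUnique_path v r
  have hPr : P r = Walk.nil := ((hP r).2 Walk.nil Walk.IsPath.nil).symm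
  have hnn : ∀ v, v ≠ r → ¬ (P v).Nil := by
    intro v hv hnil
    exact hv (Walk.eq_of_length_eq_zero (Walk.nil_iff_length_eq.mp hnil))
  refine ⟨fun v => (P v).getVert 1, fun v => (P v).length, ?_, ?_, ?_, ?_⟩
  · intro v hv; exact (P v).adj_snd (hnn v hv)
  · intro v hv
    have h1 : Walk.cons ((P v).adj_snd (hnn v hv)) (P v).tail = P v :=
      Walk.cons_tail_eq _ (hnn v hv)
    have htp : (P v).tail.IsPath := (hP v).1.tail
    have h2 : (P v).tail = P ((P v).getVert 1) := (hP _).2 _ htp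
    have h3 := congrArg Walk.length h1
    rw [Walk.length_cons, h2] at h3
    exact h3
  · intro v hv; exact Walk.eq_of_length_eq_zero hv
  · intro u w h
    by_cases hw : w ∈ (P u).support
    · left
      have hur : u ≠ r := by
        rintro rfl
        rw [hPr] at hw
        simp only [Walk.support_nil, List.mem_singleton] at hw
        subst hw
        exact G.loopless.irrefl _ h
      refine ⟨hur, ?_⟩
      have ht := (P u).take_spec hw
      have h1 : (P u).takeUntil w hw = Walk.cons h Walk.nil := by
        have hp1 : ((P u).takeUntil w hw).IsPath := (hP u).1.takeUntil hw
        have hp2 : (Walk.cons h Walk.nil).IsPath := by simp [h.ne]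
        exact (hG.existsUnique_path u w).unique hp1 hp2
      rw [h1, Walk.cons_append, Walk.nil_append] at ht
      show (P u).getVert 1 = w
      rw [← ht]
      exact Walk.snd_cons _ h
    · right
      have hQ : (Walk.cons h.symm (P u)).IsPath := (hP u).1.cons hw
      have hPw : Walk.cons h.symm (P u) = P w := (hP w).2 _ hQ
      have hwr : w ≠ r := by
        rintro rfl
        rw [hPr] at hPw
        simpa using congrArg Walk.length hPw
      refine ⟨hwr, ?_⟩
      show (P w).getVert 1 = u
      rw [← hPw]
      exact Walk.snd_cons _ h.symm

/-- Summation over ordered adjacent pairs, in terms of the parent function. -/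
lemma qLap_sum_pairs {V : Type*} [Fintype V] [DecidableEq V] {G : SimpleGraph V}
    [DecidableRel G.Adj] (r : V) (p : V → V) (depth : V → ℕ)
    (hadj : ∀ v, v ≠ r → G.Adj v (p v))
    (hdepth : ∀ v, v ≠ r → depth (p v) + 1 = depth v)
    (hdich : ∀ u w, G.Adj u w → (u ≠ r ∧ p u = w) ∨ (w ≠ r ∧ p w = u))
    (g : V → V → ℝ) :
    ∑ u, ∑ w ∈ G.neighborFinset u, g u w
      = ∑ v ∈ univ.filter (· ≠ r), (g v (p v) + g (p v) v) := by
  classical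
  have key : ∀ u w, u ≠ r → p u = w → w ≠ r → p w = u → False := by
    intro u w hur hpu hwr hpw
    have h1 := hdepth u hur
    have h2 := hdepth w hwr
    rw [hpu] at h1; rw [hpw] at h2; omega
  have lhs : ∑ u, ∑ w ∈ G.neighborFinset u, g u w
      = ∑ x ∈ (univ ×ˢ univ).filter (fun x : V × V => G.Adj x.1 x.2), g x.1 x.2 := by
    rw [Finset.sum_filter, Finset.sum_product]
    refine Finset.sum_congr rfl fun u _ => ?_
    rw [SimpleGraph.neighborFinset_eq_filter, Finset.sum_filter]
  have rhs : ∑ x ∈ ((univ.filter (· ≠ r)) ×ˢ (univ : Finset Bool)),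
        (if x.2 then g x.1 (p x.1) else g (p x.1) x.1)
      = ∑ v ∈ univ.filter (· ≠ r), (g v (p v) + g (p v) v) := by
    rw [Finset.sum_product]
    refine Finset.sum_congr rfl fun v _ => ?_
    simp
  rw [lhs, ← rhs]
  refine Finset.sum_nbij'
    (fun x : V × V => if x.1 ≠ r ∧ p x.1 = x.2 then (x.1, true) else (x.2, false))
    (fun x : V × Bool => if x.2 then (x.1, p x.1) else (p x.1, x.1))
    ?_ ?_ ?_ ?_ ?_
  · rintro ⟨u, w⟩ huw
    simp only [Finset.mem_filter, Finset.mem_product, Finset.mem_univ, true_and] at huw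
    dsimp only
    by_cases hc : u ≠ r ∧ p u = w
    · rw [if_pos hc]
      simp only [Finset.mem_product, Finset.mem_filter, Finset.mem_univ, true_and, and_true]
      exact hc.1
    · rcases hdich u w huw with hd | hd
      · exact absurd hd hc
      · rw [if_neg hc]
        simp only [Finset.mem_product, Finset.mem_filter, Finset.mem_univ, true_and, and_true]
        exact hd.1
  · rintro ⟨v, b⟩ hv
    simp only [Finset.mem_product, Finset.mem_filter, Finset.mem_univ, true_and, and_true] at hv
    dsimp only
    cases b
    · simp only [Bool.false_eq_true, if_false, Finset.mem_filter, Finset.mem_product,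
        Finset.mem_univ, true_and]
      exact (hadj v hv).symm
    · simp only [if_true, Finset.mem_filter, Finset.mem_product, Finset.mem_univ, true_and]
      exact hadj v hv
  · rintro ⟨u, w⟩ huw
    simp only [Finset.mem_filter, Finset.mem_product, Finset.mem_univ, true_and] at huw
    dsimp only
    by_cases hc : u ≠ r ∧ p u = w
    · rw [if_pos hc]
      simp [hc.2]
    · rcases hdich u w huw with hd | hd
      · exact absurd hd hc
      · rw [if_neg hc]
        simp [hd.2]
  · rintro ⟨v, b⟩ hv
    simp only [Finset.mem_product, Finset.mem_filter, Finset.mem_univ, true_and, and_true] at hv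
    dsimp only
    cases b
    · simp only [Bool.false_eq_true, if_false]
      have hnot : ¬ (p v ≠ r ∧ p (p v) = v) := by
        rintro ⟨h1, h2⟩
        exact key (p v) v h1 h2 hv rfl
      rw [if_neg hnot]
    · simp only [if_true]
      simp [hv]
  · rintro ⟨u, w⟩ huw
    simp only [Finset.mem_filter, Finset.mem_product, Finset.mem_univ, true_and] at huw
    dsimp only
    by_cases hc : u ≠ r ∧ p u = w
    · rw [if_pos hc]
      simp [hc.2]
    · rcases hdich u w huw with hd | hd
      · exact absurd hd hc
      · rw [if_neg hc]
        simp [hd.2]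

/-- The quadratic form of the q-Laplacian, written via the parent function. -/
lemma qLap_form_eq {n : ℕ} (G : SimpleGraph (Fin n)) [DecidableRel G.Adj] (q : ℝ)
    (r : Fin n) (p : Fin n → Fin n) (depth : Fin n → ℕ)
    (hadj : ∀ v, v ≠ r → G.Adj v (p v))
    (hdepth : ∀ v, v ≠ r → depth (p v) + 1 = depth v)
    (hdich : ∀ u w, G.Adj u w → (u ≠ r ∧ p u = w) ∨ (w ≠ r ∧ p w = u))
    (x : Fin n → ℝ) :
    x ⬝ᵥ (qLap G q *ᵥ x)
      = (∑ v ∈ univ.filter (· ≠ r), (q * x (p v) - x v)^2) + (1 - q^2) * x r^2 := by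
  classical
  have hentry : ∀ u, (fun w => qLap G q u w * x w)
      = fun w => (if u = w then (1 + q^2*((G.degree u : ℝ)-1)) * x w else 0)
          + (if G.Adj u w then (-q) * x w else 0) := by
    intro u
    funext w
    by_cases h1 : u = w
    · subst h1
      simp [qLap, G.loopless.irrefl u]
    · by_cases h2 : G.Adj u w <;> simp [qLap, h1, h2]
  have hmv : ∀ u, (qLap G q *ᵥ x) u
      = (1 + q^2*((G.degree u : ℝ)-1)) * x u + (-q) * ∑ w ∈ G.neighborFinset u, x w := by
    intro u
    have h0 : (qLap G q *ᵥ x) u = ∑ w, qLap G q u w * x w := rfl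
    rw [h0, hentry u, Finset.sum_add_distrib, Finset.sum_ite_eq univ u
      (fun w => (1 + q^2*((G.degree u : ℝ)-1)) * x w)]
    simp only [Finset.mem_univ, if_true]
    congr 1
    rw [← Finset.sum_filter, ← SimpleGraph.neighborFinset_eq_filter, Finset.mul_sum]
  have hlhs : x ⬝ᵥ (qLap G q *ᵥ x)
      = ∑ u, (x u ^ 2 + q^2 * ((G.degree u : ℝ) * x u^2) - q^2 * x u^2
          - q * ∑ w ∈ G.neighborFinset u, x u * x w) := by
    have h0 : x ⬝ᵥ (qLap G q *ᵥ x) = ∑ u, x u * (qLap G q *ᵥ x) u := rfl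
    rw [h0]
    refine Finset.sum_congr rfl fun u _ => ?_
    rw [hmv u, ← Finset.mul_sum]
    ring
  rw [hlhs]
  have hXsplit : ∑ u, (x u)^2 = (∑ v ∈ univ.filter (· ≠ r), x v ^ 2) + x r ^ 2 := by
    rw [Finset.filter_ne', Finset.sum_erase_add univ _ (Finset.mem_univ r)]
  have hdeg : ∑ u, q^2 * ((G.degree u : ℝ) * x u^2)
      = q^2 * ∑ v ∈ univ.filter (· ≠ r), (x v ^ 2 + x (p v) ^ 2) := by
    rw [← qLap_sum_pairs r p depth hadj hdepth hdich (fun u w => x u ^ 2), Finset.mul_sum]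
    refine Finset.sum_congr rfl fun u _ => ?_
    rw [Finset.sum_const, SimpleGraph.card_neighborFinset_eq_degree, nsmul_eq_mul]
  have hcross : ∑ u, q * ∑ w ∈ G.neighborFinset u, x u * x w
      = q * ∑ v ∈ univ.filter (· ≠ r), (x v * x (p v) + x (p v) * x v) := by
    rw [← qLap_sum_pairs r p depth hadj hdepth hdich (fun u w => x u * x w), Finset.mul_sum]
  have hsplit4 : ∑ u, (x u ^ 2 + q^2 * ((G.degree u : ℝ) * x u^2) - q^2 * x u^2
          - q * ∑ w ∈ G.neighborFinset u, x u * x w)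
      = (∑ u, (x u)^2) + (∑ u, q^2 * ((G.degree u : ℝ) * x u^2)) - q^2 * (∑ u, (x u)^2)
        - (∑ u, q * ∑ w ∈ G.neighborFinset u, x u * x w) := by
    rw [Finset.sum_sub_distrib, Finset.sum_sub_distrib, Finset.sum_add_distrib,
      Finset.mul_sum]
  rw [hsplit4, hXsplit, hdeg, hcross]
  have hW : ∑ v ∈ univ.filter (· ≠ r), (q * x (p v) - x v)^2
      = ∑ v ∈ univ.filter (· ≠ r),
          (q^2 * (x v ^ 2 + x (p v) ^ 2) - q * (x v * x (p v) + x (p v) * x v)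
            - (q^2 - 1) * x v ^ 2) := by
    refine Finset.sum_congr rfl fun v _ => ?_
    ring
  rw [hW, Finset.sum_sub_distrib, Finset.sum_sub_distrib, ← Finset.mul_sum,
    ← Finset.mul_sum, ← Finset.mul_sum]
  ring

end Aux

section Spectral

open Matrix

lemma qLap_dot_expand {n : ℕ} {ι : Type*} [Fintype ι] [DecidableEq ι]
    (u : ι → Fin n → ℝ)
    (horth : ∀ i j, u i ⬝ᵥ u j = if i = j then 1 else 0)
    (a b : ι → ℝ) :
    (∑ j, a j • u j) ⬝ᵥ (∑ i, b i • u i) = ∑ i, a i * b i := by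
  have h2 : ∀ j, u j ⬝ᵥ (∑ i, b i • u i) = b j := by
    intro j
    have h0 : u j ⬝ᵥ (∑ i, b i • u i) = ∑ k, u j k * (∑ i, b i • u i) k := rfl
    rw [h0]
    simp only [Finset.sum_apply, Pi.smul_apply, smul_eq_mul, Finset.mul_sum]
    rw [Finset.sum_comm]
    have h1 : ∀ i, ∑ k, u j k * (b i * u i k) = b i * (u j ⬝ᵥ u i) := by
      intro i
      rw [dotProduct, Finset.mul_sum]
      exact Finset.sum_congr rfl fun k _ => by ring
    rw [Finset.sum_congr rfl fun i _ => h1 i]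
    simp [horth]
  have h3 : ∀ y : Fin n → ℝ, (∑ j, a j • u j) ⬝ᵥ y = ∑ j, a j * (u j ⬝ᵥ y) := by
    intro y
    have h0 : (∑ j, a j • u j) ⬝ᵥ y = ∑ k, (∑ j, a j • u j) k * y k := rfl
    rw [h0]
    simp only [Finset.sum_apply, Pi.smul_apply, smul_eq_mul, Finset.sum_mul]
    rw [Finset.sum_comm]
    refine Finset.sum_congr rfl fun j _ => ?_
    rw [dotProduct, Finset.mul_sum]
    exact Finset.sum_congr rfl fun k _ => by ring
  rw [h3]
  exact Finset.sum_congr rfl fun j _ => by rw [h2 j]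

/-- Representation of the quadratic form on a span of eigenvectors. -/
lemma qLap_dot_repr {n : ℕ} (M : Matrix (Fin n) (Fin n) ℝ) (hM : M.IsHermitian)
    (s : Finset (Fin n)) (x : EuclideanSpace ℝ (Fin n))
    (hx : x ∈ Submodule.span ℝ
      (Set.range fun i : s => (hM.eigenvectorBasis i : EuclideanSpace ℝ (Fin n)))) :
    ∃ c : s → ℝ, dotProduct x (M.mulVec x)
      = ∑ i : s, hM.eigenvalues i * (c i)^2 := by
  classical
  obtain ⟨c, hc⟩ := (Submodule.mem_span_range_iff_exists_fun ℝ).mp hx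
  refine ⟨c, ?_⟩
  have horth : ∀ i j : s,
      dotProduct ⇑(hM.eigenvectorBasis (i : Fin n)) ⇑(hM.eigenvectorBasis (j : Fin n))
        = if i = j then 1 else 0 := by
    intro i j
    have h := orthonormal_iff_ite.mp hM.eigenvectorBasis.orthonormal (i : Fin n) (j : Fin n)
    have h' : dotProduct ⇑(hM.eigenvectorBasis (i : Fin n))
        ⇑(hM.eigenvectorBasis (j : Fin n)) = if (i : Fin n) = (j : Fin n) then 1 else 0 := by
      simpa [PiLp.inner_apply, RCLike.inner_apply, dotProduct, mul_comm] using h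
    rw [h']
    by_cases hij : i = j
    · subst hij; simp
    · rw [if_neg hij, if_neg (fun hcoe => hij (Subtype.ext hcoe))]
  have hcfun : (⇑x : Fin n → ℝ) = ∑ i : s, c i • ⇑(hM.eigenvectorBasis (i : Fin n)) := by
    rw [← hc, WithLp.ofLp_sum]
    rfl
  have hmv : M *ᵥ (⇑x : Fin n → ℝ) = ∑ i : s, (c i * hM.eigenvalues (i : Fin n)) •
      ⇑(hM.eigenvectorBasis (i : Fin n)) := by
    rw [hcfun, ← Matrix.mulVecLin_apply, map_sum]
    refine Finset.sum_congr rfl fun i _ => ?_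
    rw [LinearMap.map_smul, Matrix.mulVecLin_apply, hM.mulVec_eigenvectorBasis, smul_smul]
  have h0 : dotProduct x (M.mulVec x)
      = dotProduct (⇑x : Fin n → ℝ) (M *ᵥ (⇑x : Fin n → ℝ)) := rfl
  rw [h0, hmv, hcfun, qLap_dot_expand _ horth]
  exact Finset.sum_congr rfl fun i _ => by ring

end Spectral

open Matrix

/-- For a tree on `n ≥ 2` vertices and a real `q` with `|q| > 1`, the (symmetric)
`q`-Laplacian has signature `(n-1, 1, 0)`: exactly `n-1` positive eigenvalues,
exactly `1` negative eigenvalue, and `0` is not an eigenvalue. -/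
theorem qLap_signature {n : ℕ} (hn : 2 ≤ n) (G : SimpleGraph (Fin n))
    [DecidableRel G.Adj] (hG : G.IsTree) (q : ℝ) (hq : 1 < |q|)
    (hH : (qLap G q).IsHermitian) :
    (Finset.univ.filter fun i => 0 < hH.eigenvalues i).card = n - 1 ∧
    (Finset.univ.filter fun i => hH.eigenvalues i < 0).card = 1 ∧
    (Finset.univ.filter fun i => hH.eigenvalues i = 0).card = 0 := by
  classical
  have hn0 : 0 < n := by omega
  set r : Fin n := ⟨0, hn0⟩ with hr
  obtain ⟨p, depth, hadj, hdepth, hdepth0, hdich⟩ := qLap_tree_parent hG r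
  have hform := qLap_form_eq G q r p depth hadj hdepth hdich
  have hq1 : (1:ℝ) < q^2 := by nlinarith [sq_abs q, abs_nonneg q]
  have hq0 : q ≠ 0 := by
    intro h
    rw [h, abs_zero] at hq
    linarith
  -- positivity of the form on vectors vanishing at the root
  have hpos : ∀ x : Fin n → ℝ, x r = 0 →
      0 ≤ x ⬝ᵥ (qLap G q *ᵥ x) ∧ (x ⬝ᵥ (qLap G q *ᵥ x) = 0 → x = 0) := by
    intro x hxr
    have h1 : x ⬝ᵥ (qLap G q *ᵥ x) = ∑ v ∈ univ.filter (· ≠ r), (q * x (p v) - x v)^2 := by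
      rw [hform x, hxr]
      ring
    constructor
    · rw [h1]
      exact Finset.sum_nonneg fun v _ => sq_nonneg _
    · intro h0
      rw [h1] at h0
      have hz : ∀ v ∈ univ.filter (· ≠ r), (q * x (p v) - x v)^2 = 0 :=
        (Finset.sum_eq_zero_iff_of_nonneg fun v _ => sq_nonneg _).mp h0
      have hxv : ∀ v, v ≠ r → x v = q * x (p v) := by
        intro v hv
        have h2 := hz v (by simp [hv])
        have h3 : q * x (p v) - x v = 0 := by
          have := sq_eq_zero_iff.mp h2
          exact this
        linarith
      have key : ∀ k v, depth v ≤ k → x v = 0 := by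
        intro k
        induction k with
        | zero =>
          intro v hv
          rw [hdepth0 v (Nat.le_zero.mp hv)]
          exact hxr
        | succ k ih =>
          intro v hv
          by_cases hvr : v = r
          · rw [hvr]; exact hxr
          · have h2 := hdepth v hvr
            rw [hxv v hvr, ih (p v) (by omega), mul_zero]
      funext v
      exact key (depth v) v le_rfl
  -- the negative vector
  set vneg : Fin n → ℝ := fun i => q ^ depth i with hvnegdef
  have hvneg : vneg ⬝ᵥ (qLap G q *ᵥ vneg) < 0 := by
    have h1 : ∀ v ∈ univ.filter (· ≠ r), (q * vneg (p v) - vneg v)^2 = 0 := by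
      intro v hv
      simp only [Finset.mem_filter, Finset.mem_univ, true_and] at hv
      have h2 := hdepth v hv
      have h3 : q * q ^ depth (p v) = q ^ depth v := by
        rw [← h2, pow_succ]
        ring
      simp [hvnegdef, h3]
    rw [hform vneg, Finset.sum_eq_zero h1, zero_add]
    have h4 : (0:ℝ) < (vneg r)^2 := by
      have : vneg r ≠ 0 := pow_ne_zero _ hq0
      positivity
    nlinarith
  have hvneg0 : vneg ≠ 0 := by
    intro h
    have h2 := congrFun h r
    simp only [hvnegdef, Pi.zero_apply] at h2
    exact pow_ne_zero _ hq0 h2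
  -- submodules
  set sNeg : Finset (Fin n) := univ.filter (fun i => hH.eigenvalues i ≤ 0) with hsNeg
  set sPos : Finset (Fin n) := univ.filter (fun i => 0 ≤ hH.eigenvalues i) with hsPos
  set WNeg : Submodule ℝ (EuclideanSpace ℝ (Fin n)) :=
    Submodule.span ℝ (Set.range fun i : sNeg =>
      (hH.eigenvectorBasis (i : Fin n) : EuclideanSpace ℝ (Fin n))) with hWNeg
  set WPos : Submodule ℝ (EuclideanSpace ℝ (Fin n)) :=
    Submodule.span ℝ (Set.range fun i : sPos =>
      (hH.eigenvectorBasis (i : Fin n) : EuclideanSpace ℝ (Fin n))) with hWPos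
  have hrankNeg : Module.finrank ℝ WNeg = sNeg.card := by
    have hli : LinearIndependent ℝ (fun i : sNeg =>
        (hH.eigenvectorBasis (i : Fin n) : EuclideanSpace ℝ (Fin n))) :=
      hH.eigenvectorBasis.orthonormal.linearIndependent.comp
        (fun i : sNeg => (i : Fin n)) Subtype.val_injective
    rw [hWNeg, finrank_span_eq_card hli, Fintype.card_coe]
  have hrankPos : Module.finrank ℝ WPos = sPos.card := by
    have hli : LinearIndependent ℝ (fun i : sPos =>
        (hH.eigenvectorBasis (i : Fin n) : EuclideanSpace ℝ (Fin n))) :=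
      hH.eigenvectorBasis.orthonormal.linearIndependent.comp
        (fun i : sPos => (i : Fin n)) Subtype.val_injective
    rw [hWPos, finrank_span_eq_card hli, Fintype.card_coe]
  -- the coordinate functional at the root
  set f : EuclideanSpace ℝ (Fin n) →ₗ[ℝ] ℝ :=
    { toFun := fun x => x r
      map_add' := fun _ _ => rfl
      map_smul' := fun _ _ => rfl } with hf
  have hrankKer : Module.finrank ℝ (LinearMap.ker f) = n - 1 := by
    have h1 := LinearMap.finrank_range_add_finrank_ker f
    have h2 : LinearMap.range f = ⊤ :=
      LinearMap.range_eq_top.mpr fun y => ⟨WithLp.toLp 2 (fun _ => y : Fin n → ℝ), rfl⟩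
    rw [h2, finrank_top, Module.finrank_self, finrank_euclideanSpace_fin] at h1
    omega
  -- negative + zero eigenvalues count at most 1
  have hnegcard : sNeg.card ≤ 1 := by
    have hdisj : WNeg ⊓ LinearMap.ker f = ⊥ := by
      rw [Submodule.eq_bot_iff]
      intro x hx
      obtain ⟨h1, h2⟩ := Submodule.mem_inf.mp hx
      obtain ⟨c, hc⟩ := qLap_dot_repr (qLap G q) hH sNeg x h1
      have hle : dotProduct x ((qLap G q).mulVec x) ≤ 0 := by
        rw [hc]
        refine Finset.sum_nonpos fun i _ => ?_
        have hi : hH.eigenvalues (i : Fin n) ≤ 0 := (Finset.mem_filter.mp i.2).2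
        exact mul_nonpos_of_nonpos_of_nonneg hi (sq_nonneg _)
      have hxr : (x : Fin n → ℝ) r = 0 := LinearMap.mem_ker.mp h2
      obtain ⟨hge, h0⟩ := hpos x hxr
      simpa using h0 (le_antisymm hle hge)
    have hsum := Submodule.finrank_sup_add_finrank_inf_eq WNeg (LinearMap.ker f)
    rw [hdisj, finrank_bot, add_zero, hrankNeg, hrankKer] at hsum
    have hle := Submodule.finrank_le (WNeg ⊔ LinearMap.ker f)
    rw [hsum, finrank_euclideanSpace_fin] at hle
    omega
  -- positive + zero eigenvalues count at most n - 1
  set vnegE : EuclideanSpace ℝ (Fin n) := WithLp.toLp 2 (vneg : Fin n → ℝ) with hvnegE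
  have hvnegE0 : vnegE ≠ 0 := fun h => hvneg0 (by simpa [hvnegE] using congrArg WithLp.ofLp h)
  have hposcard : sPos.card ≤ n - 1 := by
    have hdisj : Submodule.span ℝ {vnegE} ⊓ WPos = ⊥ := by
      rw [Submodule.eq_bot_iff]
      intro x hx
      obtain ⟨h1, h2⟩ := Submodule.mem_inf.mp hx
      obtain ⟨a, ha⟩ := Submodule.mem_span_singleton.mp h1
      obtain ⟨c, hc⟩ := qLap_dot_repr (qLap G q) hH sPos x h2
      have hge : 0 ≤ dotProduct x ((qLap G q).mulVec x) := by
        rw [hc]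
        refine Finset.sum_nonneg fun i _ => ?_
        have hi : 0 ≤ hH.eigenvalues (i : Fin n) := (Finset.mem_filter.mp i.2).2
        exact mul_nonneg hi (sq_nonneg _)
      by_cases ha0 : a = 0
      · rw [← ha, ha0, zero_smul]
      · exfalso
        have hQx : dotProduct x ((qLap G q).mulVec x)
            = a^2 * (vneg ⬝ᵥ (qLap G q *ᵥ vneg)) := by
          rw [← ha]
          show (a • vneg) ⬝ᵥ (qLap G q *ᵥ (a • vneg)) = _
          rw [Matrix.mulVec_smul, smul_dotProduct, dotProduct_smul]
          simp only [smul_eq_mul]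
          ring
        have h5 : (0:ℝ) < a^2 := by positivity
        nlinarith
    have hsum := Submodule.finrank_sup_add_finrank_inf_eq
      (Submodule.span ℝ {vnegE}) WPos
    rw [hdisj, finrank_bot, add_zero, hrankPos,
      finrank_span_singleton hvnegE0] at hsum
    have hle := Submodule.finrank_le
      ((Submodule.span ℝ {vnegE}) ⊔ WPos)
    rw [hsum, finrank_euclideanSpace_fin] at hle
    omega
  -- final counting
  have hsplitle : sNeg.card = (univ.filter fun i => hH.eigenvalues i < 0).card
      + (univ.filter fun i => hH.eigenvalues i = 0).card := by
    rw [hsNeg]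
    rw [show (univ.filter fun i => hH.eigenvalues i ≤ 0)
        = (univ.filter fun i => hH.eigenvalues i < 0)
          ∪ (univ.filter fun i => hH.eigenvalues i = 0) by
      rw [← Finset.filter_or]
      refine Finset.filter_congr fun i _ => ?_
      exact le_iff_lt_or_eq]
    refine Finset.card_union_of_disjoint ?_
    rw [Finset.disjoint_left]
    intro i h1 h2
    simp only [Finset.mem_filter, Finset.mem_univ, true_and] at h1 h2
    rw [h2] at h1
    exact lt_irrefl 0 h1
  have hsplitge : sPos.card = (univ.filter fun i => 0 < hH.eigenvalues i).card
      + (univ.filter fun i => hH.eigenvalues i = 0).card := by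
    rw [hsPos]
    rw [show (univ.filter fun i => 0 ≤ hH.eigenvalues i)
        = (univ.filter fun i => 0 < hH.eigenvalues i)
          ∪ (univ.filter fun i => hH.eigenvalues i = 0) by
      rw [← Finset.filter_or]
      refine Finset.filter_congr fun i _ => ?_
      constructor
      · intro h
        rcases h.lt_or_eq with h | h
        · exact Or.inl h
        · exact Or.inr h.symm
      · rintro (h | h)
        · exact h.le
        · exact h.ge]
    refine Finset.card_union_of_disjoint ?_
    rw [Finset.disjoint_left]
    intro i h1 h2
    simp only [Finset.mem_filter, Finset.mem_univ, true_and] at h1 h2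
    rw [h2] at h1
    exact lt_irrefl 0 h1
  have htot : (univ.filter fun i => 0 < hH.eigenvalues i).card + sNeg.card = n := by
    rw [hsNeg]
    rw [show (univ.filter fun i => hH.eigenvalues i ≤ 0)
        = (univ.filter fun i => ¬ 0 < hH.eigenvalues i) by
      refine Finset.filter_congr fun i _ => ?_
      exact not_lt.symm]
    rw [Finset.card_filter_add_card_filter_not, Finset.card_univ, Fintype.card_fin]
  omega
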